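/- Let J be a nonempty proper subset of {0,…,d}. If z ∈ A_J satisfies ρ'(z)(δ_0) = 0 and x ∈ 𝔩(J), then ρ'(z·ι(x))(δ_0) = 0. -/

import Mathlib

open UniversalEnvelopingAlgebra

attribute [local instance] LieRing.ofAssociativeRing

noncomputable def Tbl (K : Type) [Field K] (d : ℕ) (b l : Fin (d+1)) :
    Module.End K ((Fin (d+1) → ℤ) →₀ K) :=
  Finsupp.lsum K fun ν =>
    (if ν b = 0 then ((1 - ν l : ℤ) : K) else 0) •
      Finsupp.lsingle (ν + Pi.single b 1 - Pi.single l 1)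

lemma Tbl_single (K : Type) [Field K] (d : ℕ) (b l : Fin (d+1)) (ν : Fin (d+1) → ℤ) (c : K) :
    Tbl K d b l (Finsupp.single ν c) =
      (if ν b = 0 then ((1 - ν l : ℤ) : K) else 0) •
        Finsupp.single (ν + Pi.single b 1 - Pi.single l 1) c := by
  show Finsupp.lsum K _ _ = _
  rw [Finsupp.lsum_single, LinearMap.smul_apply, Finsupp.lsingle_apply]

lemma coeff_id (d : ℕ) (b l i j : Fin (d+1)) (hbl : b ≠ l) (hib : i ≠ b) (hil : i ≠ l)
    (ν : Fin (d+1) → ℤ) :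
    (if ν b = 0 then (1 - ν l) else 0) * ((ν + Pi.single b 1 - Pi.single l 1 : Fin (d+1) → ℤ) j - 1)
      = (ν j - 1) *
        (if (ν + Pi.single i 1 - Pi.single j 1 : Fin (d+1) → ℤ) b = 0 then
          (1 - (ν + Pi.single i 1 - Pi.single j 1 : Fin (d+1) → ℤ) l) else 0) := by
  have hbi : ¬ (b = i) := fun h => hib h.symm
  have hli : ¬ (l = i) := fun h => hil h.symm
  simp only [Pi.add_apply, Pi.sub_apply, Pi.single_apply, if_neg hbi, if_neg hli]
  rcases eq_or_ne j b with hjb | hjb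
  · subst hjb
    have hjl : ¬ (j = l) := hbl
    have hlj : ¬ (l = j) := fun h => hbl h.symm
    simp only [if_pos rfl, if_neg hjl, if_neg hlj]
    split_ifs with h1 h2 h2
    · exfalso; omega
    · rw [h1]; ring
    · rw [show ν j = 1 by omega]; ring
    · ring
  · have hbj : ¬ (b = j) := fun h => hjb h.symm
    simp only [if_neg hjb, if_neg hbj]
    rcases eq_or_ne j l with hjl | hjl
    · subst hjl
      simp only [if_pos rfl]
      split_ifs with h1 h2 h2
      · ring
      · exfalso; omega
      · exfalso; omega
      · ring
    · have hlj : ¬ (l = j) := fun h => hjl h.symm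
      simp only [if_neg hjl, if_neg hlj]
      split_ifs with h1 h2 h2
      · ring
      · exfalso; omega
      · exfalso; omega
      · ring

lemma Tbl_comm (K : Type) [Field K] (d : ℕ)
    (ρ' : UniversalEnvelopingAlgebra K (Matrix (Fin (d+1)) (Fin (d+1)) K) →ₐ[K]
        Module.End K ((Fin (d+1) → ℤ) →₀ K))
    (hρ'₁ : ∀ (i j : Fin (d+1)), i ≠ j → ∀ ν : Fin (d+1) → ℤ,
      ρ' (ι K (Matrix.single i j (1:K))) (Finsupp.single ν (1:K)) =
        (ν j - 1) • Finsupp.single (ν + Pi.single i 1 - Pi.single j 1) (1:K))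
    (b l i j : Fin (d+1)) (hbl : b ≠ l) (hib : i ≠ b) (hil : i ≠ l) (hij : i ≠ j) :
    ρ' (ι K (Matrix.single i j (1:K))) * Tbl K d b l
      = Tbl K d b l * ρ' (ι K (Matrix.single i j (1:K))) := by
  apply Finsupp.lhom_ext
  intro ν c
  have hc : (Finsupp.single ν c : (Fin (d+1) → ℤ) →₀ K) = c • Finsupp.single ν (1:K) := by
    rw [Finsupp.smul_single, smul_eq_mul, mul_one]
  rw [Module.End.mul_apply, Module.End.mul_apply, hc, map_smul, map_smul, map_smul, map_smul]
  congr 1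
  rw [Tbl_single, hρ'₁ i j hij ν, map_smul, map_zsmul, Tbl_single,
    hρ'₁ i j hij (ν + Pi.single b 1 - Pi.single l 1)]
  have hidx : (ν + Pi.single b 1 - Pi.single l 1 + Pi.single i 1 - Pi.single j 1 : Fin (d+1) → ℤ)
      = ν + Pi.single i 1 - Pi.single j 1 + Pi.single b 1 - Pi.single l 1 := by abel
  rw [hidx, ← Int.cast_smul_eq_zsmul K ((ν + Pi.single b 1 - Pi.single l 1 : Fin (d+1) → ℤ) j - 1),
    ← Int.cast_smul_eq_zsmul K (ν j - 1), smul_smul, smul_smul]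
  have e1 : (if ν b = 0 then ((1 - ν l : ℤ) : K) else 0)
      = (((if ν b = 0 then (1 - ν l) else 0 : ℤ) : K)) := by split_ifs <;> simp
  have e2 : (if (ν + Pi.single i 1 - Pi.single j 1 : Fin (d+1) → ℤ) b = 0 then
        ((1 - (ν + Pi.single i 1 - Pi.single j 1 : Fin (d+1) → ℤ) l : ℤ) : K) else 0)
      = (((if (ν + Pi.single i 1 - Pi.single j 1 : Fin (d+1) → ℤ) b = 0 then
        (1 - (ν + Pi.single i 1 - Pi.single j 1 : Fin (d+1) → ℤ) l) else 0 : ℤ) : K)) := by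
    split_ifs <;> simp
  rw [e1, e2, ← Int.cast_mul, ← Int.cast_mul, coeff_id d b l i j hbl hib hil ν]

/-- For J a nonempty proper subset of {0,…,d}, if z ∈ A_J satisfies
ρ'(z)(δ_0) = 0 and x ∈ 𝔩(J), then ρ'(z·ι(x))(δ_0) = 0 ((U(𝔫_J⁺) ∩ 𝔟)·𝔩(J) ⊆ 𝔟). -/
theorem stmt_13 (K : Type) [Field K] [CharZero K] (d : ℕ) (hd : 1 ≤ d)
    (ρ' : UniversalEnvelopingAlgebra K (Matrix (Fin (d+1)) (Fin (d+1)) K) →ₐ[K]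
        Module.End K ((Fin (d+1) → ℤ) →₀ K))
    (hρ'₁ : ∀ (i j : Fin (d+1)), i ≠ j → ∀ ν : Fin (d+1) → ℤ,
      ρ' (ι K (Matrix.single i j (1:K))) (Finsupp.single ν (1:K)) =
        (ν j - 1) • Finsupp.single (ν + Pi.single i 1 - Pi.single j 1) (1:K))
    (hρ'₂ : ∀ (k : Fin (d+1)) (ν : Fin (d+1) → ℤ),
      ρ' (ι K (Matrix.single k k (1:K))) (Finsupp.single ν (1:K)) =
        ν k • Finsupp.single ν (1:K))
    (J : Set (Fin (d+1))) (hJ : J.Nonempty) (hJ' : J ≠ Set.univ)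
    (AJ : Subalgebra K (UniversalEnvelopingAlgebra K (Matrix (Fin (d+1)) (Fin (d+1)) K)))
    (hAJ : AJ = Algebra.adjoin K
      {w | ∃ i ∈ J, ∃ j ∉ J, w = ι K (Matrix.single i j (1:K))})
    (z : UniversalEnvelopingAlgebra K (Matrix (Fin (d+1)) (Fin (d+1)) K))
    (hz : z ∈ AJ)
    (hzδ : ρ' z (Finsupp.single (0 : Fin (d+1) → ℤ) (1:K)) = 0)
    (x : Matrix (Fin (d+1)) (Fin (d+1)) K)
    (hx : ∀ i j : Fin (d+1), i ∈ J ∨ j ∈ J → x i j = 0) :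
    ρ' (z * ι K x) (Finsupp.single (0 : Fin (d+1) → ℤ) (1:K)) = 0 := by
  rw [hAJ] at hz
  have key : ∀ w ∈ Algebra.adjoin K
      {w | ∃ i ∈ J, ∃ j ∉ J, w = ι K (Matrix.single i j (1:K))},
      ∀ b l : Fin (d+1), b ∉ J → l ∉ J → b ≠ l →
      ρ' w * Tbl K d b l = Tbl K d b l * ρ' w := by
    intro w hw
    induction hw using Algebra.adjoin_induction with
    | mem w hw =>
      intro b l hb hl hbl
      obtain ⟨i, hi, j, hj, rfl⟩ := hw
      exact Tbl_comm K d ρ' hρ'₁ b l i j hbl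
        (fun h => hb (h ▸ hi)) (fun h => hl (h ▸ hi)) (fun h => hj (h ▸ hi))
    | algebraMap r =>
      intro b l hb hl hbl
      rw [AlgHom.commutes]
      exact Algebra.commutes r _
    | add u v hu hv ihu ihv =>
      intro b l hb hl hbl
      rw [map_add, add_mul, mul_add, ihu b l hb hl hbl, ihv b l hb hl hbl]
    | mul u v hu hv ihu ihv =>
      intro b l hb hl hbl
      rw [map_mul, mul_assoc, ihv b l hb hl hbl, ← mul_assoc, ihu b l hb hl hbl, mul_assoc]
  have h0 : ∀ i j : Fin (d+1), i ∉ J → j ∉ J → i ≠ j →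
      ρ' z (Finsupp.single ((0 : Fin (d+1) → ℤ) + Pi.single i 1 - Pi.single j 1) (1:K)) = 0 := by
    intro i j hi hj hij
    have hT : Tbl K d i j (Finsupp.single (0 : Fin (d+1) → ℤ) (1:K)) =
        Finsupp.single ((0 : Fin (d+1) → ℤ) + Pi.single i 1 - Pi.single j 1) (1:K) := by
      rw [Tbl_single]
      norm_num
    rw [← hT, ← Module.End.mul_apply, key z hz i j hi hj hij, Module.End.mul_apply, hzδ, map_zero]
  have hιsum : ι K x = ∑ i, ∑ j, ι K (Matrix.single i j (x i j)) := by
    conv_lhs => rw [Matrix.matrix_eq_sum_single x]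
    rw [← LieHom.coe_toLinearMap, map_sum]
    simp only [map_sum, LieHom.coe_toLinearMap]
  rw [map_mul, Module.End.mul_apply, hιsum]
  rw [map_sum, LinearMap.coe_sum, Finset.sum_apply, map_sum]
  apply Finset.sum_eq_zero
  intro i _
  rw [map_sum, LinearMap.coe_sum, Finset.sum_apply, map_sum]
  apply Finset.sum_eq_zero
  intro j _
  by_cases hmem : i ∈ J ∨ j ∈ J
  · rw [hx i j hmem]
    simp
  · push_neg at hmem
    obtain ⟨hi, hj⟩ := hmem
    have hsm : Matrix.single i j (x i j) = x i j • Matrix.single i j (1:K) := by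
      rw [Matrix.smul_single, smul_eq_mul, mul_one]
    rw [hsm, map_smul, map_smul, LinearMap.smul_apply, map_smul]
    by_cases hij : i = j
    · subst hij
      rw [hρ'₂ i 0]
      simp
    · rw [hρ'₁ i j hij 0, map_zsmul, h0 i j hi hj hij, smul_zero, smul_zero]
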